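/- Let P^⊥ and Q^⊥ be the linear cellular automaton shifts determined by Φ and Ψ with S(Φ) ⊆ S(Ψ). Let φ : P^⊥ → Q^⊥ be a topological homomorphism admitting a local rule γ on a finite shape S ⊂ ℤ^d, i.e., γ : (S → 𝔽_p) → 𝔽_p satisfies φ(x)(n) = γ(s ↦ x(n+s)) for all x ∈ P^⊥ and n ∈ ℤ^d. Then for every family of configurations (C_m)_{m ∈ S(Ψ)}, C_m : S → 𝔽_p, such that each C_m occurs in P^⊥ (i.e., there is y ∈ P^⊥ with y(s) = C_m(s) for all s ∈ S), the configuration D := Σ_{m ∈ S(Φ)} Φ(m)·C_m also occurs in P^⊥, and γ(D) = Σ_{m ∈ S(Ψ)} Ψ(m)·γ(C_m). -/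

import Mathlib

open MeasureTheory Filter Topology

namespace LCA

/-- The full shift `𝔽_p^{ℤ^d}`. -/
abbrev Full (p d : ℕ) : Type := (Fin d → ℤ) → ZMod p

/-- The shift action: `(σ_g x)(n) = x(n+g)`. -/
def shift (p d : ℕ) (g : Fin d → ℤ) (x : Full p d) : Full p d := fun n => x (n + g)

/-- `e_d = (0,…,0,1)`, the exponent of the "time" variable `X_d`. -/
def eLast (d : ℕ) : Fin d → ℤ := fun i => if (i : ℕ) = d - 1 then 1 else 0

/-- The linear cellular automaton shift `P^⊥` for `P = X_d − Φ`, as a set: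
all `x` with `x(n+e_d) = Σ_{m ∈ S(Φ)} Φ(m)·x(n+m)` for every `n`. -/
def Pperp (p d : ℕ) (Φ : (Fin d → ℤ) →₀ ZMod p) : Set (Full p d) :=
  {x | ∀ n : Fin d → ℤ, x (n + eLast d) = ∑ m ∈ Φ.support, Φ m * x (n + m)}

/-- `P^⊥` as a closed, shift-invariant subgroup of the full shift. -/
def PperpGroup (p d : ℕ) (Φ : (Fin d → ℤ) →₀ ZMod p) : AddSubgroup (Full p d) where
  carrier := Pperp p d Φ
  zero_mem' := by intro n; simp
  add_mem' := by
    intro x y hx hy n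
    simp only [Pi.add_apply, hx n, hy n, mul_add, Finset.sum_add_distrib]
  neg_mem' := by
    intro x hx n
    simp only [Pi.neg_apply, hx n, mul_neg, Finset.sum_neg_distrib, neg_inj]

lemma shift_mem_Pperp (p d : ℕ) (Φ : (Fin d → ℤ) →₀ ZMod p) (g : Fin d → ℤ)
    {x : Full p d} (hx : x ∈ Pperp p d Φ) : shift p d g x ∈ Pperp p d Φ := by
  intro n
  simpa [shift, add_right_comm] using hx (n + g)

/-- The shift action restricted to `P^⊥`. -/
def shiftSub (p d : ℕ) (Φ : (Fin d → ℤ) →₀ ZMod p) (g : Fin d → ℤ)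
    (x : PperpGroup p d Φ) : PperpGroup p d Φ :=
  ⟨shift p d g x.1, shift_mem_Pperp p d Φ g x.2⟩

end LCA

open LCA

namespace LCAAux
open LCA

variable {p d : ℕ}

abbrev R' (p d : ℕ) := AddMonoidAlgebra (ZMod p) (Fin d → ℤ)

noncomputable def act (q : R' p d) (x : Full p d) : Full p d :=
  fun n => ∑ g ∈ q.coeff.support, q.coeff g * x (n + g)

lemma act_eq_sum (q : R' p d) (x : Full p d) {U : Finset (Fin d → ℤ)}
    (hU : q.coeff.support ⊆ U) (n : Fin d → ℤ) :
    act q x n = ∑ g ∈ U, q.coeff g * x (n + g) := by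
  refine Finset.sum_subset hU ?_
  intro g _ hgs
  simp [Finsupp.notMem_support_iff.mp hgs]

lemma act_single (g : Fin d → ℤ) (a : ZMod p) (x : Full p d) (n : Fin d → ℤ) :
    act (AddMonoidAlgebra.single g a) x n = a * x (n + g) := by
  rw [act_eq_sum (AddMonoidAlgebra.single g a) x Finsupp.support_single_subset n]
  simp

lemma act_sub (q r : R' p d) (x : Full p d) (n : Fin d → ℤ) :
    act (q - r) x n = act q x n - act r x n := by
  rw [act_eq_sum (q - r) x (U := q.coeff.support ∪ r.coeff.support) Finsupp.support_sub n,
    act_eq_sum q x (U := q.coeff.support ∪ r.coeff.support) Finset.subset_union_left n,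
    act_eq_sum r x (U := q.coeff.support ∪ r.coeff.support) Finset.subset_union_right n]
  rw [← Finset.sum_sub_distrib]
  refine Finset.sum_congr rfl fun g _ => ?_
  rw [AddMonoidAlgebra.coeff_sub, Finsupp.sub_apply, sub_mul]

lemma act_zero_right (q : R' p d) : act q (0 : Full p d) = 0 := by
  funext n; simp [act]

open scoped Pointwise in
lemma act_mul (q r : R' p d) (x : Full p d) : act (q * r) x = act q (act r x) := by
  classical
  funext n
  rw [act_eq_sum (q * r) x (AddMonoidAlgebra.support_coeff_mul_subset q r) n]
  have hcoef : ∀ u, (q * r).coeff u =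
      ∑ g ∈ q.coeff.support, ∑ h ∈ r.coeff.support, if g + h = u then q.coeff g * r.coeff h else 0 := by
    intro u
    rw [AddMonoidAlgebra.coeff_mul]
    rfl
  calc ∑ u ∈ q.coeff.support + r.coeff.support, (q * r).coeff u * x (n + u)
      = ∑ u ∈ q.coeff.support + r.coeff.support, ∑ g ∈ q.coeff.support, ∑ h ∈ r.coeff.support,
          (if g + h = u then q.coeff g * r.coeff h * x (n + u) else 0) := by
        refine Finset.sum_congr rfl fun u _ => ?_
        rw [hcoef u, Finset.sum_mul]
        refine Finset.sum_congr rfl fun g _ => ?_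
        rw [Finset.sum_mul]
        refine Finset.sum_congr rfl fun h _ => ?_
        split <;> simp
    _ = ∑ g ∈ q.coeff.support, ∑ h ∈ r.coeff.support, ∑ u ∈ q.coeff.support + r.coeff.support,
          (if g + h = u then q.coeff g * r.coeff h * x (n + u) else 0) := by
        rw [Finset.sum_comm]
        refine Finset.sum_congr rfl fun g _ => Finset.sum_comm
    _ = ∑ g ∈ q.coeff.support, ∑ h ∈ r.coeff.support, q.coeff g * r.coeff h * x (n + (g + h)) := by
        refine Finset.sum_congr rfl fun g hg => Finset.sum_congr rfl fun h hh => ?_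
        rw [Finset.sum_ite_eq (q.coeff.support + r.coeff.support) (g + h)
          (fun u => q.coeff g * r.coeff h * x (n + u)), if_pos (Finset.add_mem_add hg hh)]
    _ = act q (act r x) n := by
        unfold act
        refine Finset.sum_congr rfl fun g _ => ?_
        rw [Finset.mul_sum]
        refine Finset.sum_congr rfl fun h _ => ?_
        rw [add_assoc]
        ring


/-- Reinterpret a finitely supported function as an element of the group algebra. -/
def toR (Φ : (Fin d → ℤ) →₀ ZMod p) : R' p d := AddMonoidAlgebra.ofCoeff Φ

@[simp] lemma toR_apply (Φ : (Fin d → ℤ) →₀ ZMod p) (m : Fin d → ℤ) : (toR Φ).coeff m = Φ m := rfl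

@[simp] lemma toR_support (Φ : (Fin d → ℤ) →₀ ZMod p) : (toR Φ).coeff.support = Φ.support := rfl

lemma charP_R' [Fact p.Prime] : CharP (R' p d) p := by
  have hinj : Function.Injective
      (AddMonoidAlgebra.singleZeroRingHom (R := ZMod p) (M := Fin d → ℤ)) := by
    intro a b h
    simpa using congrArg (fun f => f.coeff 0) h
  exact charP_of_injective_ringHom hinj p

lemma act_add (q r : R' p d) (x : Full p d) (n : Fin d → ℤ) :
    act (q + r) x n = act q x n + act r x n := by
  have := act_sub q (-r) x n
  rw [sub_neg_eq_add] at this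
  rw [this]
  have h2 := act_sub 0 r x n
  have h0 : act (0 : R' p d) x n = 0 := by simp [act]
  rw [zero_sub] at h2
  rw [h2, h0, zero_sub, sub_neg_eq_add]

lemma act_sum_single {ι : Type} (F : Finset ι) (σ : ι → (Fin d → ℤ)) (c : ι → ZMod p)
    (x : Full p d) (n : Fin d → ℤ) :
    act (∑ m ∈ F, AddMonoidAlgebra.single (σ m) (c m)) x n = ∑ m ∈ F, c m * x (n + σ m) := by
  classical
  induction F using Finset.induction_on with
  | empty => simp [act]
  | insert _ _ hnot ih =>
      rename_i a F'
      rw [Finset.sum_insert hnot, Finset.sum_insert hnot, act_add, act_single, ih]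

lemma mem_Pperp_iff (Φ : (Fin d → ℤ) →₀ ZMod p) (x : Full p d) :
    x ∈ Pperp p d Φ ↔ ∀ n, act (AddMonoidAlgebra.single (eLast d) 1 - toR Φ) x n = 0 := by
  have hact : ∀ n, act (toR Φ) x n = ∑ m ∈ Φ.support, Φ m * x (n + m) := fun n => rfl
  constructor
  · intro hx n
    rw [act_sub, act_single, one_mul, hact, ← hx n, sub_self]
  · intro h n
    have := h n
    rw [act_sub, act_single, one_mul, hact, sub_eq_zero] at this
    exact this

lemma act_pow_eq_zero (P : R' p d) (x : Full p d) (hx : ∀ n, act P x n = 0)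
    (N : ℕ) (hN : N ≠ 0) : ∀ n, act (P ^ N) x n = 0 := by
  obtain ⟨M, rfl⟩ : ∃ M, N = M + 1 := ⟨N - 1, by omega⟩
  clear hN
  induction M with
  | zero => simpa [pow_one] using hx
  | succ M ih =>
      have hx0 : act P x = 0 := funext hx
      intro n
      rw [pow_succ, act_mul, hx0, act_zero_right]
      simp [act]

lemma pow_decomp [Fact p.Prime] (Φ : (Fin d → ℤ) →₀ ZMod p) (k : ℕ) :
    (AddMonoidAlgebra.single (eLast d) 1 - toR Φ) ^ (p ^ k)
      = AddMonoidAlgebra.single ((p ^ k) • eLast d) 1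
        - ∑ m ∈ Φ.support, AddMonoidAlgebra.single ((p ^ k) • m) (Φ m) := by
  haveI := charP_R' (p := p) (d := d)
  rw [sub_pow_char_pow]
  congr 1
  · rw [AddMonoidAlgebra.single_pow, one_pow]
  · have hΦ : toR Φ = ∑ m ∈ Φ.support, AddMonoidAlgebra.single m (Φ m) := by
      conv_lhs => rw [← Finsupp.sum_single Φ]
      rw [toR, Finsupp.sum, AddMonoidAlgebra.ofCoeff_sum]; rfl
    rw [hΦ, sum_pow_char_pow]
    refine Finset.sum_congr rfl fun m _ => ?_
    rw [AddMonoidAlgebra.single_pow, ZMod.pow_card_pow]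

lemma frob [Fact p.Prime] (Φ : (Fin d → ℤ) →₀ ZMod p) {x : Full p d}
    (hx : x ∈ Pperp p d Φ) (k : ℕ) (n : Fin d → ℤ) :
    x (n + (p ^ k) • eLast d) = ∑ m ∈ Φ.support, Φ m * x (n + (p ^ k) • m) := by
  have hP := (mem_Pperp_iff Φ x).mp hx
  have hpk : p ^ k ≠ 0 := pow_ne_zero k (Fact.out : p.Prime).pos.ne'
  have h0 := act_pow_eq_zero _ x hP (p ^ k) hpk n
  rw [pow_decomp, act_sub, act_single, one_mul, act_sum_single, sub_eq_zero] at h0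
  exact h0


lemma act_add_right (q : R' p d) (x y : Full p d) (n : Fin d → ℤ) :
    act q (x + y) n = act q x n + act q y n := by
  simp [act, mul_add, Finset.sum_add_distrib]

lemma act_smul_right (q : R' p d) (a : ZMod p) (x : Full p d) (n : Fin d → ℤ) :
    act q (a • x) n = a * act q x n := by
  simp [act, Finset.mul_sum, smul_eq_mul, mul_left_comm]

lemma act_continuous [Fact p.Prime] (q : R' p d) : Continuous (act q : Full p d → Full p d) := by
  refine continuous_pi fun n => ?_
  have hrw : (fun x : Full p d => act q x n)
      = (fun v : {g // g ∈ q.coeff.support} → ZMod p => ∑ g ∈ q.coeff.support.attach, q.coeff g.1 * v g)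
        ∘ (fun x g => x (n + g.1)) := by
    funext x
    simp only [Function.comp_apply, act]
    rw [← Finset.sum_attach q.coeff.support (fun g => q.coeff g * x (n + g))]
  rw [hrw]
  exact continuous_of_discreteTopology.comp (continuous_pi fun g => continuous_apply _)

lemma exists_functional {K V : Type} [Field K] [AddCommGroup V] [Module K V]
    (W : Submodule K V) (v : V) (hv : v ∉ W) :
    ∃ ℓ : V →ₗ[K] K, (∀ w ∈ W, ℓ w = 0) ∧ ℓ v ≠ 0 := by
  have h0 : Submodule.mkQ W v ≠ 0 := by simpa [Submodule.Quotient.mk_eq_zero] using hv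
  obtain ⟨g, hg⟩ : ∃ g : (V ⧸ W) →ₗ[K] K, g (W.mkQ v) ≠ 0 := by
    by_contra h
    push_neg at h
    exact h0 ((Module.forall_dual_apply_eq_zero_iff K _).mp h)
  refine ⟨g.comp W.mkQ, fun w hw => ?_, hg⟩
  have : W.mkQ w = 0 := by simpa [Submodule.Quotient.mk_eq_zero] using hw
  simp [this]

lemma act_surjective [Fact p.Prime] (Φ : (Fin d → ℤ) →₀ ZMod p) (hΦ : Φ ≠ 0) :
    Function.Surjective (act (toR Φ) : Full p d → Full p d) := by
  classical
  by_contra hs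
  unfold Function.Surjective at hs
  push_neg at hs
  obtain ⟨g, hg⟩ := hs
  simp only [ne_eq] at hg
  replace hg : ∀ f, act (toR Φ) f ≠ g := fun f h => (hg f) h
  have hrange : IsClosed (Set.range (act (toR Φ) : Full p d → Full p d)) :=
    (isCompact_range (act_continuous _)).isClosed
  have hopen : IsOpen (Set.range (act (toR Φ) : Full p d → Full p d))ᶜ := hrange.isOpen_compl
  have hgmem : g ∈ (Set.range (act (toR Φ) : Full p d → Full p d))ᶜ := by
    intro hmem
    obtain ⟨f, hf⟩ := hmem
    exact hg f hf
  obtain ⟨I, u, hu, hsubset⟩ := (isOpen_pi_iff.mp hopen) g hgmem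
  have key : ∀ f : Full p d, ∃ n ∈ I, act (toR Φ) f n ≠ g n := by
    intro f
    by_contra h
    push_neg at h
    have hmem : act (toR Φ) f ∈ (I : Set (Fin d → ℤ)).pi u := by
      intro n hn
      rw [h n hn]
      exact (hu n hn).2
    exact (hsubset hmem) ⟨f, rfl⟩
  -- finite-dimensional linear algebra
  let V : Type := {n // n ∈ I} → ZMod p
  let L : Full p d →ₗ[ZMod p] V :=
    { toFun := fun f j => act (toR Φ) f j.1
      map_add' := fun f f' => by funext j; exact act_add_right _ f f' j.1
      map_smul' := fun a f => by funext j; exact act_smul_right _ a f j.1 }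
  let v : V := fun j => g j.1
  have hv : v ∉ LinearMap.range L := by
    rintro ⟨f, hf⟩
    obtain ⟨n, hn, hne⟩ := key f
    exact hne (congrFun hf ⟨n, hn⟩)
  obtain ⟨ℓ, hℓ0, hℓv⟩ := exists_functional _ v hv
  let c : {n // n ∈ I} → ZMod p := fun j => ℓ (fun j' => if j = j' then 1 else 0)
  have hexpand : ∀ w : V, ℓ w = ∑ j, w j * c j := by
    intro w
    conv_lhs => rw [pi_eq_sum_univ w]
    rw [map_sum]
    refine Finset.sum_congr rfl fun j _ => ?_
    rw [_root_.map_smul, smul_eq_mul]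
  let δ : (Fin d → ℤ) → Full p d := fun w v' => if v' = w then 1 else 0
  have hactδ : ∀ w n, act (toR Φ) (δ w) n = Φ (w - n) := by
    intro w n
    have h1 : act (toR Φ) (δ w) n
        = ∑ m ∈ Φ.support, Φ m * (if n + m = w then 1 else 0) := rfl
    rw [h1]
    by_cases hmem : w - n ∈ Φ.support
    · rw [Finset.sum_eq_single_of_mem (w - n) hmem]
      · rw [if_pos (by abel), mul_one]
      · intro m hm hne
        rw [if_neg, mul_zero]
        intro hc
        exact hne (by rw [← hc]; abel)
    · rw [Finsupp.notMem_support_iff.mp hmem]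
      refine (Finset.sum_eq_zero fun m hm => ?_).symm.symm
      rw [if_neg, mul_zero]
      intro hc
      apply hmem
      have : m = w - n := by rw [← hc]; abel
      rwa [← this]
  let chat : R' p d := ∑ j : {n // n ∈ I}, AddMonoidAlgebra.single j.1 (c j)
  have hmul : chat * toR Φ = 0 := by
    ext w
    have h1 : (chat * toR Φ).coeff w = ∑ j : {n // n ∈ I}, c j * Φ (w - j.1) := by
      have : chat * toR Φ
          = ∑ j : {n // n ∈ I}, AddMonoidAlgebra.single j.1 (c j) * toR Φ :=
        Finset.sum_mul ..
      rw [this, AddMonoidAlgebra.coeff_sum, Finsupp.finset_sum_apply]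
      refine Finset.sum_congr rfl fun j _ => ?_
      rw [AddMonoidAlgebra.coeff_single_mul_apply, neg_add_eq_sub, toR_apply]
    have h2 : ℓ (L (δ w)) = 0 := hℓ0 _ ⟨δ w, rfl⟩
    rw [hexpand] at h2
    have h3 : ∀ j : {n // n ∈ I}, (L (δ w)) j = Φ (w - j.1) := fun j => hactδ w j.1
    show (chat * toR Φ).coeff w = (0 : ZMod p)
    rw [h1, ← h2]
    refine (Finset.sum_congr rfl fun j _ => ?_)
    rw [h3 j, mul_comm]
  have hchat : chat = 0 := by
    rcases mul_eq_zero.mp hmul with h | h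
    · exact h
    · exact absurd (AddMonoidAlgebra.ofCoeff_eq_zero.mp h) hΦ
  have hc : ∀ j, c j = 0 := by
    intro j0
    have h4 : chat.coeff j0.1 = 0 := by rw [hchat]; rfl
    rw [AddMonoidAlgebra.coeff_sum, Finsupp.finset_sum_apply] at h4
    have h5 : ∀ j : {n // n ∈ I},
        (AddMonoidAlgebra.single j.1 (c j) : R' p d).coeff j0.1 = if j = j0 then c j else 0 := by
      intro j
      rw [AddMonoidAlgebra.coeff_single, Finsupp.single_apply]
      congr 1
      simp only [Subtype.ext_iff]
    rw [Finset.sum_congr rfl fun j _ => h5 j] at h4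
    simpa using h4
  apply hℓv
  rw [hexpand]
  simp [hc]


lemma ext_row [Fact p.Prime] (Φ : (Fin d → ℤ) →₀ ZMod p) (hΦ : Φ ≠ 0) (hd1 : 0 < d)
    (hΦsupp : ∀ m ∈ Φ.support, m ⟨d-1, by omega⟩ = 0)
    (f : Full p d) (a : ℤ) :
    ∃ x ∈ Pperp p d Φ, ∀ n : Fin d → ℤ, n ⟨d-1, by omega⟩ = a → x n = f n := by
  classical
  set i0 : Fin d := ⟨d-1, by omega⟩ with hi0
  have heL : eLast d i0 = 1 := by simp [eLast, hi0]
  have hsurj := act_surjective Φ hΦ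
  let g : ℕ → Full p d := fun i => Nat.rec f (fun _ prev => Classical.choose (hsurj prev)) i
  have hg : ∀ i, act (toR Φ) (g (i+1)) = g i := fun i => Classical.choose_spec (hsurj (g i))
  have hg0 : g 0 = f := rfl
  let h : ℤ → Full p d := fun t =>
    if a ≤ t then (act (toR Φ))^[(t-a).toNat] f else g (a - t).toNat
  have hstep : ∀ t : ℤ, act (toR Φ) (h t) = h (t + 1) := by
    intro t
    by_cases hat : a ≤ t
    · have h1 : h t = (act (toR Φ))^[(t-a).toNat] f := if_pos hat
      have h2 : h (t+1) = (act (toR Φ))^[(t+1-a).toNat] f := if_pos (by omega)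
      have h3 : (t+1-a).toNat = (t-a).toNat + 1 := by omega
      rw [h1, h2, h3, Function.iterate_succ_apply']
    · have h1 : h t = g (a - t).toNat := if_neg hat
      by_cases hat1 : a ≤ t + 1
      · have h2 : h (t+1) = f := by
          show (if a ≤ t + 1 then (act (toR Φ))^[(t+1-a).toNat] f else g (a-(t+1)).toNat) = f
          rw [if_pos hat1]
          have h5 : (t+1-a).toNat = 0 := by omega
          rw [h5]
          rfl
        have h4 : (a - t).toNat = 1 := by omega
        rw [h1, h2, h4]
        exact (hg 0).trans hg0
      · have h2 : h (t+1) = g (a - (t+1)).toNat := if_neg hat1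
        have h4 : (a - t).toNat = (a - (t+1)).toNat + 1 := by omega
        rw [h1, h2, h4]
        exact hg _
  refine ⟨fun n => h (n i0) (n + (a - n i0) • eLast d), ?_, ?_⟩
  · intro n
    set t : ℤ := n i0 with ht
    have hnei : (n + eLast d) i0 = t + 1 := by
      rw [Pi.add_apply, heL]
    show h ((n + eLast d) i0) ((n + eLast d) + (a - (n + eLast d) i0) • eLast d)
        = ∑ m ∈ Φ.support, Φ m *
          (fun n' => h (n' i0) (n' + (a - n' i0) • eLast d)) (n + m)
    rw [hnei]
    have harg : (n + eLast d) + (a - (t+1)) • eLast d = n + (a - t) • eLast d := by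
      funext i
      simp only [Pi.add_apply, Pi.smul_apply, smul_eq_mul]
      ring
    rw [harg, ← hstep t]
    have hrhs : ∀ m ∈ Φ.support,
        (fun n' => h (n' i0) (n' + (a - n' i0) • eLast d)) (n + m)
          = h t (n + (a - t) • eLast d + m) := by
      intro m hm
      have hmi : (n + m) i0 = t := by
        rw [Pi.add_apply, hΦsupp m hm, add_zero]
      show h ((n + m) i0) ((n + m) + (a - (n + m) i0) • eLast d)
          = h t (n + (a - t) • eLast d + m)
      rw [hmi]
      congr 1
      funext i
      simp only [Pi.add_apply, Pi.smul_apply, smul_eq_mul]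
      ring
    show (∑ m ∈ Φ.support, Φ m * h t (n + (a - t) • eLast d + m)) = _
    exact (Finset.sum_congr rfl fun m hm => by rw [hrhs m hm]).symm
  · intro n hn
    show h (n i0) (n + (a - n i0) • eLast d) = f n
    rw [hn, sub_self, zero_smul, add_zero]
    show (if a ≤ a then (act (toR Φ))^[(a-a).toNat] f else g (a-a).toNat) n = f n
    rw [if_pos le_rfl, sub_self]
    rfl

lemma cone (Φ : (Fin d → ℤ) →₀ ZMod p) (t : ℕ) (x y : Full p d)
    (hx : x ∈ Pperp p d Φ) (hy : y ∈ Pperp p d Φ) (n : Fin d → ℤ)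
    (h : ∀ l : Fin t → (Fin d → ℤ), (∀ i, l i ∈ Φ.support) →
      x (n + ∑ i, l i) = y (n + ∑ i, l i)) :
    x (n + t • eLast d) = y (n + t • eLast d) := by
  induction t generalizing n with
  | zero =>
      have := h (fun i => i.elim0) (fun i => i.elim0)
      simpa using this
  | succ t ih =>
      have hx' := hx (n + t • eLast d)
      have hy' := hy (n + t • eLast d)
      have harg : n + (t+1) • eLast d = (n + t • eLast d) + eLast d := by
        rw [succ_nsmul, add_assoc]
      rw [harg, hx', hy']
      refine Finset.sum_congr rfl fun m hm => ?_
      congr 1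
      have hcomm : n + t • eLast d + m = (n + m) + t • eLast d := by
        rw [add_right_comm]
      rw [hcomm]
      refine ih (n + m) fun l hl => ?_
      have := h (Fin.cons m l) (fun i => by
        refine Fin.cases ?_ ?_ i
        · simpa using hm
        · intro j; simpa using hl j)
      rw [Fin.sum_cons] at this
      have harg2 : n + (m + ∑ i, l i) = n + m + ∑ i, l i := by rw [add_assoc]
      rwa [harg2] at this


noncomputable def boundOf (F : Finset (Fin d → ℤ)) : ℕ :=
  F.sup fun v => Finset.univ.sup fun i => (v i).natAbs

lemma le_boundOf {F : Finset (Fin d → ℤ)} {v : Fin d → ℤ} (hv : v ∈ F) (i : Fin d) :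
    (v i).natAbs ≤ boundOf F :=
  le_trans (Finset.le_sup (f := fun i => (v i).natAbs) (Finset.mem_univ i))
    (Finset.le_sup (f := fun v => Finset.univ.sup fun i => (v i).natAbs) hv)

end LCAAux

open LCAAux

/-- Suppose `S(Φ) ⊆ S(Ψ)` and `φ : P^⊥ → Q^⊥` is a topological
homomorphism admitting a local rule `γ` on a finite shape `S`, i.e.
`φ(x)(n) = γ(s ↦ x(n+s))`.  Then for every family of configurations `(C_m)_{m ∈ S(Ψ)}`
on `S`, each occurring in `P^⊥`, the configuration `D = Σ_{m ∈ S(Φ)} Φ(m)·C_m` also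
occurs in `P^⊥`, and `γ(D) = Σ_{m ∈ S(Ψ)} Ψ(m)·γ(C_m)`. -/
theorem local_rule_functional_equation (p d : ℕ) [Fact p.Prime] (hd : 2 ≤ d)
    (Φ Ψ : (Fin d → ℤ) →₀ ZMod p)
    (hΦsupp : ∀ m ∈ Φ.support, m ⟨d - 1, by omega⟩ = 0)
    (hΨsupp : ∀ m ∈ Ψ.support, m ⟨d - 1, by omega⟩ = 0)
    (hΦ2 : 2 ≤ Φ.support.card) (hΨ2 : 2 ≤ Ψ.support.card)
    (hsub : Φ.support ⊆ Ψ.support)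
    (φ : PperpGroup p d Φ → PperpGroup p d Ψ)
    (hcont : Continuous φ) (h0 : φ 0 = 0)
    (hequiv : ∀ (g : Fin d → ℤ) (x : PperpGroup p d Φ),
      φ (shiftSub p d Φ g x) = shiftSub p d Ψ g (φ x))
    (S : Finset (Fin d → ℤ))
    (γ : ({s // s ∈ S} → ZMod p) → ZMod p)
    (hγ : ∀ (x : PperpGroup p d Φ) (n : Fin d → ℤ),
      (φ x : Full p d) n = γ (fun s => (x : Full p d) (n + s.1)))
    (C : (Fin d → ℤ) → ({s // s ∈ S} → ZMod p))
    (hC : ∀ m ∈ Ψ.support, ∃ y ∈ Pperp p d Φ, ∀ s : {s // s ∈ S}, y s.1 = C m s) :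
    (∃ y ∈ Pperp p d Φ, ∀ s : {s // s ∈ S},
        y s.1 = ∑ m ∈ Φ.support, Φ m * C m s) ∧
    γ (fun s => ∑ m ∈ Φ.support, Φ m * C m s) = ∑ m ∈ Ψ.support, Ψ m * γ (C m) := by
  classical
  have hd1 : 0 < d := by omega
  set i0 : Fin d := ⟨d - 1, by omega⟩ with hi0
  have heL : eLast d i0 = 1 := by simp [eLast, hi0]
  have hΦ0 : Φ ≠ 0 := by
    intro h
    rw [h] at hΦ2
    simp at hΦ2
  -- choose realizing configurations
  have hC' : ∀ m, ∃ z : Full p d, m ∈ Ψ.support →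
      z ∈ Pperp p d Φ ∧ ∀ s : {s // s ∈ S}, z s.1 = C m s := by
    intro m
    by_cases hm : m ∈ Ψ.support
    · obtain ⟨z, hz1, hz2⟩ := hC m hm
      exact ⟨z, fun _ => ⟨hz1, hz2⟩⟩
    · exact ⟨0, fun h => absurd h hm⟩
  choose z hz using hC'
  -- bounds
  set A : ℕ := boundOf S with hA
  set M : ℕ := boundOf Φ.support with hM
  set R : ℕ := 3 * A + 2 * A * M with hR
  set k : ℕ := 2 * R + 1 with hk
  set N : ℕ := p ^ k with hN
  have hp2 : 2 ≤ p := (Fact.out : p.Prime).two_le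
  have hNR : 2 * R < N := by
    calc 2 * R < 2 ^ k := by
          have := Nat.lt_two_pow_self (n := k)
          omega
      _ ≤ p ^ k := Nat.pow_le_pow_left hp2 k
  -- the row configuration
  set f : Full p d := fun n =>
    ∑ m ∈ Ψ.support, if (∀ i, ((n - N • m) i).natAbs ≤ R) then z m (n - N • m) else 0
    with hf
  have hNsmul : ∀ (m : Fin d → ℤ) (i : Fin d), (N • m) i = (N : ℤ) * m i := by
    intro m i
    simp [Pi.smul_apply, nsmul_eq_mul]
  have key_f : ∀ m0 ∈ Ψ.support, ∀ w : Fin d → ℤ,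
      (∀ i, (w i).natAbs ≤ R) → f (N • m0 + w) = z m0 w := by
    intro m0 hm0 w hw
    show (∑ m ∈ Ψ.support,
      if (∀ i, ((N • m0 + w - N • m) i).natAbs ≤ R) then z m (N • m0 + w - N • m) else 0) = z m0 w
    rw [Finset.sum_eq_single_of_mem m0 hm0]
    · rw [if_pos]
      · congr 1
        abel
      · intro i
        have : N • m0 + w - N • m0 = w := by abel
        rw [this]
        exact hw i
    · intro m hm hne
      rw [if_neg]
      intro hall
      obtain ⟨i, hi⟩ := Function.ne_iff.mp hne
      have hvi : (N • m0 + w - N • m) i = (N : ℤ) * (m0 i - m i) + w i := by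
        simp only [Pi.sub_apply, Pi.add_apply, hNsmul]
        ring
      have h1 : (1 : ℤ) ≤ |m0 i - m i| := Int.one_le_abs (sub_ne_zero.mpr hi.symm)
      have h2 : (N : ℤ) ≤ |(N : ℤ) * (m0 i - m i)| := by
        rw [abs_mul, abs_of_nonneg (by positivity : (0:ℤ) ≤ (N:ℤ))]
        nlinarith
      have h3 : |w i| ≤ (R : ℤ) := by
        rw [Int.abs_eq_natAbs]
        exact_mod_cast hw i
      have h4 := hall i
      rw [hvi] at h4
      have h5 : |(N : ℤ) * (m0 i - m i) + w i| ≤ (R : ℤ) := by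
        rw [Int.abs_eq_natAbs]
        exact_mod_cast h4
      have h6 : |(N : ℤ) * (m0 i - m i)| ≤ |(N : ℤ) * (m0 i - m i) + w i| + |w i| := by
        have := abs_add_le ((N : ℤ) * (m0 i - m i) + w i) (-(w i))
        simpa using this
      have hNR' : (2 * R : ℤ) < (N : ℤ) := by exact_mod_cast hNR
      linarith
  -- extend f to an element of Pperp
  obtain ⟨x, hx, hxrow⟩ := ext_row Φ hΦ0 hd1 hΦsupp f (-(A : ℤ))
  -- realization
  have hreal : ∀ m ∈ Ψ.support, ∀ s : {s // s ∈ S}, x (N • m + s.1) = C m s := by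
    intro m hm s
    have hsA : ∀ i, (s.1 i).natAbs ≤ A := fun i => le_boundOf s.2 i
    set t' : ℕ := (s.1 i0 + A).toNat with ht'def
    have ht' : (t' : ℤ) = s.1 i0 + A := by
      have := hsA i0
      omega
    have ht2A : t' ≤ 2 * A := by
      have := hsA i0
      omega
    set w0 : Fin d → ℤ := s.1 - t' • eLast d with hw0
    set n0 : Fin d → ℤ := N • m + w0 with hn0
    have hzm' : shift p d (-(N • m)) (z m) ∈ Pperp p d Φ :=
      shift_mem_Pperp p d Φ _ (hz m hm).1
    have hagree : ∀ l : Fin t' → (Fin d → ℤ), (∀ j, l j ∈ Φ.support) →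
        x (n0 + ∑ j, l j) = shift p d (-(N • m)) (z m) (n0 + ∑ j, l j) := by
      intro l hl
      set w : Fin d → ℤ := w0 + ∑ j, l j with hw
      have hwB : ∀ i, (w i).natAbs ≤ R := by
        intro i
        have hb1 : (s.1 i).natAbs ≤ A := hsA i
        have hb2 : ((t' • eLast d : Fin d → ℤ) i).natAbs ≤ 2 * A := by
          have : (t' • eLast d : Fin d → ℤ) i = (t' : ℤ) * eLast d i := by
            simp [Pi.smul_apply, nsmul_eq_mul]
          rw [this]
          by_cases hie : (i : ℕ) = d - 1
          · simp only [eLast, if_pos hie, mul_one]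
            omega
          · simp only [eLast, if_neg hie, mul_zero]
            omega
        have hb3 : ((∑ j, l j) i).natAbs ≤ t' * M := by
          have he : (∑ j, l j) i = ∑ j, l j i := by
            simp [Finset.sum_apply]
          rw [he]
          calc (∑ j, l j i).natAbs ≤ ∑ j, (l j i).natAbs := nat_abs_sum_le _ _
            _ ≤ ∑ _j : Fin t', M :=
                Finset.sum_le_sum fun j _ => le_boundOf (hl j) i
            _ = t' * M := by
                rw [Finset.sum_const, Finset.card_univ, Fintype.card_fin, smul_eq_mul]
        have hwi : w i = s.1 i - (t' • eLast d : Fin d → ℤ) i + (∑ j, l j) i := by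
          simp [hw, hw0, Pi.add_apply, Pi.sub_apply]
        have htM : t' * M ≤ 2 * A * M := Nat.mul_le_mul_right M ht2A
        rw [hwi]
        have := Int.natAbs_add_le (s.1 i - (t' • eLast d : Fin d → ℤ) i) ((∑ j, l j) i)
        have := Int.natAbs_sub_le (s.1 i) ((t' • eLast d : Fin d → ℤ) i)
        omega
      have hrow : (n0 + ∑ j, l j) i0 = -(A : ℤ) := by
        have h1 : (N • m : Fin d → ℤ) i0 = 0 := by
          rw [hNsmul, hΨsupp m hm, mul_zero]
        have h2 : w0 i0 = -(A : ℤ) := by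
          have : (t' • eLast d : Fin d → ℤ) i0 = (t' : ℤ) := by
            simp [Pi.smul_apply, nsmul_eq_mul, heL]
          simp only [hw0, Pi.sub_apply, this]
          omega
        have h3 : (∑ j, l j) i0 = 0 := by
          rw [Finset.sum_apply]
          exact Finset.sum_eq_zero fun j _ => hΦsupp (l j) (hl j)
        simp only [hn0, Pi.add_apply, h1, h2, h3]
        ring
      have hxf : x (n0 + ∑ j, l j) = f (n0 + ∑ j, l j) := hxrow _ hrow
      have harg : n0 + ∑ j, l j = N • m + w := by
        rw [hn0, hw]
        abel
      have hfz : f (n0 + ∑ j, l j) = z m w := by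
        rw [harg]
        exact key_f m hm w hwB
      have hsz : shift p d (-(N • m)) (z m) (n0 + ∑ j, l j) = z m w := by
        show z m ((n0 + ∑ j, l j) + -(N • m)) = z m w
        congr 1
        rw [harg]
        abel
      rw [hxf, hfz, hsz]
    have hc := cone Φ t' x (shift p d (-(N • m)) (z m)) hx hzm' n0 hagree
    have harg2 : n0 + t' • eLast d = N • m + s.1 := by
      rw [hn0, hw0]
      abel
    rw [harg2] at hc
    have hfinal : shift p d (-(N • m)) (z m) (N • m + s.1) = C m s := by
      show z m ((N • m + s.1) + -(N • m)) = C m s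
      have : (N • m + s.1) + -(N • m) = s.1 := by abel
      rw [this]
      exact (hz m hm).2 s
    rw [hc, hfinal]
  -- conclusions
  have hpart1 : ∀ s : {s // s ∈ S},
      x (s.1 + N • eLast d) = ∑ m ∈ Φ.support, Φ m * C m s := by
    intro s
    rw [frob Φ hx k s.1]
    refine Finset.sum_congr rfl fun m hm => ?_
    congr 1
    rw [add_comm s.1 (N • m)]
    exact hreal m (hsub hm) s
  constructor
  · refine ⟨shift p d (N • eLast d) x, shift_mem_Pperp p d Φ _ hx, ?_⟩
    intro s
    exact hpart1 s
  · have hφx : ((φ ⟨x, hx⟩ : PperpGroup p d Ψ) : Full p d) ∈ Pperp p d Ψ := (φ ⟨x, hx⟩).2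
    have hF := frob Ψ hφx k 0
    have hL : ((φ ⟨x, hx⟩ : PperpGroup p d Ψ) : Full p d) (0 + N • eLast d)
        = γ (fun s => ∑ m ∈ Φ.support, Φ m * C m s) := by
      rw [hγ ⟨x, hx⟩ (0 + N • eLast d)]
      congr 1
      funext s
      have : (0 : Fin d → ℤ) + N • eLast d + s.1 = s.1 + N • eLast d := by abel
      rw [this]
      exact hpart1 s
    have hRm : ∀ m ∈ Ψ.support,
        ((φ ⟨x, hx⟩ : PperpGroup p d Ψ) : Full p d) (0 + N • m) = γ (C m) := by
      intro m hm
      rw [hγ ⟨x, hx⟩ (0 + N • m)]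
      congr 1
      funext s
      have : (0 : Fin d → ℤ) + N • m + s.1 = N • m + s.1 := by abel
      rw [this]
      exact hreal m hm s
    rw [← hL, hF]
    exact Finset.sum_congr rfl fun m hm => by rw [hRm m hm]
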